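/- Let a > 0 and define ψ(u) = a·(1 − exp(−(1/a)·(u₊)²)), where u₊ = max(u,0). Then for any A ≥ 1, the function g(u) = A·u² − ψ(u) is convex on ℝ. -/

import Mathlib

open Real

lemma maxsq_deriv (u : ℝ) : HasDerivAt (fun x : ℝ => max x 0 ^ 2) (2 * max u 0) u := by
  rcases lt_trichotomy u 0 with hu | hu | hu
  · have h : (fun x : ℝ => max x 0 ^ 2) =ᶠ[nhds u] fun _ => (0:ℝ) := by
      filter_upwards [eventually_lt_nhds hu] with x hx
      simp [max_eq_right hx.le]
    have h0 : HasDerivAt (fun _ : ℝ => (0:ℝ)) 0 u := hasDerivAt_const u 0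
    have := h0.congr_of_eventuallyEq h
    simpa [max_eq_right hu.le] using this
  case inr.inr =>
    have h : (fun x : ℝ => max x 0 ^ 2) =ᶠ[nhds u] fun x => x ^ 2 := by
      filter_upwards [eventually_gt_nhds hu] with x hx
      simp [max_eq_left hx.le]
    have h0 : HasDerivAt (fun x : ℝ => x ^ 2) (2 * u) u := by
      simpa using hasDerivAt_pow 2 u
    have := h0.congr_of_eventuallyEq h
    simpa [max_eq_left hu.le] using this
  case inr.inl =>
    subst hu
    rw [hasDerivAt_iff_isLittleO]
    rw [Asymptotics.isLittleO_iff]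
    intro c hc
    filter_upwards [Metric.ball_mem_nhds 0 hc] with x hx
    simp only [Metric.mem_ball, Real.dist_eq, sub_zero] at hx
    have h1 : |max x 0 ^ 2| ≤ |x| * |x| := by
      rcases le_or_gt x 0 with h | h
      · rw [max_eq_right h]
        simp only [ne_eq, OfNat.ofNat_ne_zero, not_false_eq_true, zero_pow, abs_zero]
        positivity
      · rw [max_eq_left h.le, abs_pow, sq]
    have h2 : ‖max x 0 ^ 2 - max (0:ℝ) 0 ^ 2 - (x - 0) • (2 * max (0:ℝ) 0)‖ = |max x 0 ^ 2| := by
      simp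
    rw [h2]
    simp only [sub_zero, Real.norm_eq_abs]
    calc |max x 0 ^ 2| ≤ |x| * |x| := h1
      _ ≤ c * |x| := by nlinarith [abs_nonneg x]

theorem stmt_10 (a A : ℝ) (ha : 0 < a) (hA : 1 ≤ A) :
    ConvexOn ℝ Set.univ
      (fun u : ℝ => A * u ^ 2 - a * (1 - Real.exp (-(1 / a) * (max u 0) ^ 2))) := by
  set f : ℝ → ℝ := fun u => A * u ^ 2 - a * (1 - Real.exp (-(1 / a) * (max u 0) ^ 2)) with hf
  set G : ℝ → ℝ := fun u => 2 * A * u - 2 * max u 0 * Real.exp (-(1 / a) * (max u 0) ^ 2) with hG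
  have hderiv : ∀ u, HasDerivAt f (G u) u := by
    intro u
    have h1 : HasDerivAt (fun x : ℝ => max x 0 ^ 2) (2 * max u 0) u := maxsq_deriv u
    have h2 : HasDerivAt (fun x : ℝ => -(1/a) * (max x 0 ^ 2)) (-(1/a) * (2 * max u 0)) u :=
      h1.const_mul _
    have h3 := h2.exp
    have h4 : HasDerivAt (fun x : ℝ => a * (1 - Real.exp (-(1/a) * (max x 0 ^ 2))))
        (a * (0 - Real.exp (-(1/a) * (max u 0 ^ 2)) * (-(1/a) * (2 * max u 0)))) u :=
      ((hasDerivAt_const u (1:ℝ)).sub h3).const_mul a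
    have h5 : HasDerivAt (fun x : ℝ => A * x ^ 2) (A * (2 * u)) u := by
      simpa using (hasDerivAt_pow 2 u).const_mul A
    have := h5.sub h4
    convert this using 1
    · rfl
    · rfl
    · rfl
    simp only [hG]
    field_simp
    ring
  have hmono : Monotone G := by
    intro u v huv
    simp only [hG]
    have hexp_le_one : ∀ x : ℝ, Real.exp (-(1/a) * (max x 0)^2) ≤ 1 := by
      intro x
      apply Real.exp_le_one_iff.mpr
      have : (0:ℝ) ≤ (max x 0)^2 := sq_nonneg _
      have : 0 ≤ (1/a) * (max x 0)^2 := by positivity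
      linarith
    rcases le_or_gt v 0 with hv | hv
    · have hu : u ≤ 0 := huv.trans hv
      simp [max_eq_right hu, max_eq_right hv]
      nlinarith
    · rcases le_or_gt u 0 with hu | hu
      · rw [max_eq_right hu, max_eq_left hv.le]
        have hE := hexp_le_one v
        rw [max_eq_left hv.le] at hE
        have hEpos : 0 < Real.exp (-(1/a) * v^2) := Real.exp_pos _
        nlinarith
      · rw [max_eq_left hu.le, max_eq_left (hu.trans_le huv).le]
        have hEle : Real.exp (-(1/a) * v^2) ≤ Real.exp (-(1/a) * u^2) := by
          apply Real.exp_le_exp.mpr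
          have : u^2 ≤ v^2 := by nlinarith
          have hia : 0 < 1/a := by positivity
          nlinarith
        have hEv1 : Real.exp (-(1/a) * v^2) ≤ 1 := by
          have := hexp_le_one v; rwa [max_eq_left (hu.trans_le huv).le] at this
        have hEvpos : 0 < Real.exp (-(1/a) * v^2) := Real.exp_pos _
        nlinarith
  have hdiff : ∀ u ∈ interior (Set.univ : Set ℝ), DifferentiableAt ℝ f u :=
    fun u _ => (hderiv u).differentiableAt
  have hcont : ContinuousOn f Set.univ :=
    fun u _ => ((hderiv u).differentiableAt.continuousAt).continuousWithinAt
  have hdG : ∀ u ∈ interior (Set.univ : Set ℝ), deriv f u = G u := fun u _ => (hderiv u).deriv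
  apply MonotoneOn.convexOn_of_deriv convex_univ hcont (fun u hu => (hdiff u hu).differentiableWithinAt)
  intro x hx y hy hxy
  rw [hdG x hx, hdG y hy]
  exact hmono hxy
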